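/- Let G be a finite simple graph on vertex set {x₁,…,x_h} and 𝓗 = {H₁,…,H_h} with each Hᵢ a complete graph on mᵢ ≥ 1 vertices. Then every maximal independent set of the clique corona graph G∘𝓗 has exactly h vertices, consisting of precisely one vertex from each closed cluster {xᵢ} ∪ V(Hᵢ); in particular, G∘𝓗 is well-covered with independence number h. -/

import Mathlib

def cliqueWhisker {V ι : Type*} (G : SimpleGraph V) (p : V → ι) :
    SimpleGraph (V ⊕ ι) :=
  SimpleGraph.fromRel (fun a b =>
    match a, b with
    | Sum.inl u, Sum.inl v => G.Adj u v
    | Sum.inl u, Sum.inr i => p u = i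
    | _, _ => False)

def whiskerGraph {V : Type*} (G : SimpleGraph V) : SimpleGraph (V ⊕ V) :=
  SimpleGraph.fromRel (fun a b =>
    match a, b with
    | Sum.inl u, Sum.inl v => G.Adj u v
    | Sum.inl u, Sum.inr w => u = w
    | _, _ => False)

def IsVertexCover {V : Type*} (G : SimpleGraph V) (C : Set V) : Prop :=
  ∀ ⦃u v : V⦄, G.Adj u v → u ∈ C ∨ v ∈ C

def IsMinVertexCover {V : Type*} (G : SimpleGraph V) (C : Set V) : Prop :=
  IsVertexCover G C ∧ ∀ D ⊆ C, IsVertexCover G D → D = C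

def IsIndep {V : Type*} (G : SimpleGraph V) (A : Set V) : Prop :=
  ∀ u ∈ A, ∀ v ∈ A, ¬ G.Adj u v

def corona {V : Type*} (G : SimpleGraph V) (m : V → ℕ) :
    SimpleGraph (V ⊕ Σ v : V, Fin (m v + 1)) :=
  SimpleGraph.fromRel (fun a b =>
    match a, b with
    | Sum.inl u, Sum.inl v => G.Adj u v
    | Sum.inl u, Sum.inr ⟨v, _⟩ => u = v
    | Sum.inr ⟨u, _⟩, Sum.inr ⟨v, _⟩ => u = v
    | _, _ => False)

def coronaProj {V : Type*} (m : V → ℕ) : (V ⊕ Σ v : V, Fin (m v + 1)) → V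
  | Sum.inl v => v
  | Sum.inr ⟨v, _⟩ => v

lemma corona_adj_of_proj_eq {V : Type*} {G : SimpleGraph V} {m : V → ℕ}
    {a b : V ⊕ Σ v : V, Fin (m v + 1)} (hne : a ≠ b)
    (h : coronaProj m a = coronaProj m b) : (corona G m).Adj a b := by
  cases a with
  | inl u =>
    cases b with
    | inl v =>
      simp only [coronaProj] at h
      exact absurd (by rw [h]) hne
    | inr w =>
      obtain ⟨v, k⟩ := w
      simp only [coronaProj] at h
      exact ⟨hne, Or.inl h⟩
  | inr w =>
    obtain ⟨u, j⟩ := w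
    cases b with
    | inl v =>
      simp only [coronaProj] at h
      exact ⟨hne, Or.inr h.symm⟩
    | inr w' =>
      obtain ⟨v, k⟩ := w'
      simp only [coronaProj] at h
      exact ⟨hne, Or.inl h⟩

lemma corona_adj_inr {V : Type*} {G : SimpleGraph V} {m : V → ℕ} {v : V}
    {k : Fin (m v + 1)} {b : V ⊕ Σ v : V, Fin (m v + 1)}
    (h : (corona G m).Adj (Sum.inr ⟨v, k⟩) b) : coronaProj m b = v := by
  obtain ⟨-, h⟩ := h
  cases b with
  | inl u =>
    rcases h with h | h
    · exact h.elim
    · exact h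
  | inr w =>
    obtain ⟨u, j⟩ := w
    rcases h with h | h
    · exact h.symm
    · exact h

lemma proj_eq_of_cluster {V : Type*} {m : V → ℕ} {v : V}
    {a : V ⊕ Σ v : V, Fin (m v + 1)}
    (h : a = Sum.inl v ∨ ∃ k, a = Sum.inr ⟨v, k⟩) : coronaProj m a = v := by
  rcases h with rfl | ⟨k, rfl⟩ <;> rfl

theorem stmt14 {V : Type*} [Fintype V] (G : SimpleGraph V) (m : V → ℕ)
    (A : Set (V ⊕ Σ v : V, Fin (m v + 1)))
    (hA : IsIndep (corona G m) A)
    (hmax : ∀ B, IsIndep (corona G m) B → A ⊆ B → A = B) :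
    A.ncard = Fintype.card V ∧
    (∀ v : V, ∃! a, a ∈ A ∧ (a = Sum.inl v ∨ ∃ k, a = Sum.inr ⟨v, k⟩)) ∧
    ∀ B, IsIndep (corona G m) B → B.ncard ≤ Fintype.card V := by
  have injOn : ∀ B : Set (V ⊕ Σ v : V, Fin (m v + 1)), IsIndep (corona G m) B →
      Set.InjOn (coronaProj m) B := by
    intro B hB a ha b hb hab
    by_contra hne
    exact hB a ha b hb (corona_adj_of_proj_eq hne hab)
  have hsurj : ∀ v : V, ∃ a ∈ A, coronaProj m a = v := by
    intro v
    by_contra hcon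
    push_neg at hcon
    set x : V ⊕ Σ v : V, Fin (m v + 1) := Sum.inr ⟨v, 0⟩ with hx
    have hxA : x ∉ A := fun h => hcon x h rfl
    have hind : IsIndep (corona G m) (insert x A) := by
      intro a ha b hb hadj
      rcases ha with rfl | ha
      · rcases hb with rfl | hb
        · exact (corona G m).irrefl hadj
        · exact hcon b hb (corona_adj_inr hadj)
      · rcases hb with rfl | hb
        · exact hcon a ha (corona_adj_inr hadj.symm)
        · exact hA a ha b hb hadj
    have := hmax _ hind (Set.subset_insert x A)
    exact hxA (this ▸ Set.mem_insert x A)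
  have himg : coronaProj m '' A = Set.univ := by
    apply Set.eq_univ_of_forall
    intro v
    obtain ⟨a, ha, hav⟩ := hsurj v
    exact ⟨a, ha, hav⟩
  refine ⟨?_, ?_, ?_⟩
  · calc A.ncard = (coronaProj m '' A).ncard := (Set.ncard_image_of_injOn (injOn A hA)).symm
      _ = (Set.univ : Set V).ncard := by rw [himg]
      _ = Fintype.card V := by rw [Set.ncard_univ, Nat.card_eq_fintype_card]
  · intro v
    obtain ⟨a, ha, hav⟩ := hsurj v
    refine ⟨a, ⟨ha, ?_⟩, ?_⟩
    · cases a with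
      | inl u =>
        simp only [coronaProj] at hav
        exact Or.inl (by rw [hav])
      | inr w =>
        obtain ⟨u, k⟩ := w
        simp only [coronaProj] at hav
        subst hav
        exact Or.inr ⟨k, rfl⟩
    · rintro b ⟨hb, hbv⟩
      exact injOn A hA hb ha ((proj_eq_of_cluster hbv).trans hav.symm)
  · intro B hB
    calc B.ncard = (coronaProj m '' B).ncard := (Set.ncard_image_of_injOn (injOn B hB)).symm
      _ ≤ (Set.univ : Set V).ncard := Set.ncard_le_ncard (Set.subset_univ _) Set.finite_univ
      _ = Fintype.card V := by rw [Set.ncard_univ, Nat.card_eq_fintype_card]
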